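/- arXiv:1410.2996 — 2 statements merged into one kernel-verified Lean document; each statement's English description precedes it below -/
import Mathlib

section
/- Let G be a Hausdorff topological group and K a dense subgroup of G. If K (with the subspace topology) belongs to SSGP(n), then G belongs to SSGP(n). -/
universe u v

/-- The classes SSGP(n) of Hausdorff topological groups: `SSGP 0 G` iff `G` is
trivial; `SSGP (n+1) G` iff for every neighborhood `U` of `1` there is a family
`𝓗` of subgroups of `G`, each contained in `U`, such that the closure `N` of the
subgroup generated by `⋃ 𝓗` is normal and `G ⧸ N` (with the quotient topology)
belongs to `SSGP n`. -/
def SSGP : ℕ → ∀ (G : Type u) [Group G] [TopologicalSpace G] [IsTopologicalGroup G], Prop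
  | 0, G, _, _, _ => Subsingleton G
  | n + 1, G, _, _, _ =>
      ∀ U ∈ nhds (1 : G), ∃ 𝓗 : Set (Subgroup G),
        (∀ H ∈ 𝓗, (H : Set G) ⊆ U) ∧
        ∃ hN : (Subgroup.closure (⋃ H ∈ 𝓗, (H : Set G))).topologicalClosure.Normal,
          haveI := hN
          SSGP n (G ⧸ (Subgroup.closure (⋃ H ∈ 𝓗, (H : Set G))).topologicalClosure)

theorem ssgp_congr : ∀ (n : ℕ) {G₁ : Type u} {G₂ : Type v} [Group G₁] [TopologicalSpace G₁]
    [IsTopologicalGroup G₁] [Group G₂] [TopologicalSpace G₂] [IsTopologicalGroup G₂]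
    (e : G₁ ≃* G₂), Continuous e → Continuous e.symm → SSGP n G₁ → SSGP n G₂
  | 0, G₁, G₂, _, _, _, _, _, _, e, h1, h2, h => by
    rw [SSGP] at h ⊢
    exact e.symm.toEquiv.subsingleton
  | n + 1, G₁, G₂, _, _, _, _, _, _, e, h1, h2, h => by
    rw [SSGP] at h ⊢
    intro U hU
    have hU₁ : e ⁻¹' U ∈ nhds (1 : G₁) := by
      have := h1.continuousAt (x := (1 : G₁)) |>.preimage_mem_nhds (by rwa [map_one])
      exact this
    obtain ⟨𝓗, hsub, hN, hq⟩ := h (e ⁻¹' U) hU₁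
    refine ⟨(Subgroup.map (e : G₁ →* G₂)) '' 𝓗, ?_, ?_⟩
    · rintro H ⟨H₁, hH₁, rfl⟩ x hx
      obtain ⟨y, hy, rfl⟩ := hx
      exact hsub H₁ hH₁ hy
    · set S₁ : Set G₁ := ⋃ H ∈ 𝓗, (H : Set G₁) with hS₁
      set S₂ : Set G₂ := ⋃ H ∈ (Subgroup.map (e : G₁ →* G₂)) '' 𝓗, (H : Set G₂) with hS₂
      have hS : S₂ = e '' S₁ := by
        rw [hS₁, hS₂, Set.biUnion_image]
        rw [Set.image_iUnion₂]
        rfl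
      have himg : ∀ s : Set G₁, (e : G₁ → G₂) '' closure s = closure ((e : G₁ → G₂) '' s) :=
        fun s => (Homeomorph.mk e.toEquiv h1 h2).image_closure s
      have hmap : (Subgroup.closure S₁).topologicalClosure.map (e : G₁ →* G₂)
          = (Subgroup.closure S₂).topologicalClosure := by
        apply SetLike.ext'
        rw [Subgroup.coe_map, Subgroup.topologicalClosure_coe, Subgroup.topologicalClosure_coe,
          MonoidHom.coe_coe, himg, hS, ← MonoidHom.coe_coe e, ← MonoidHom.map_closure,
          Subgroup.coe_map]
      haveI hN₂ : (Subgroup.closure S₂).topologicalClosure.Normal := by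
        rw [← hmap]
        exact hN.map _ e.surjective
      refine ⟨hN₂, ?_⟩
      set e' := QuotientGroup.congr (Subgroup.closure S₁).topologicalClosure
        (Subgroup.closure S₂).topologicalClosure e hmap with he'
      refine ssgp_congr n e' ?_ ?_ hq
      · rw [(QuotientGroup.isQuotientMap_mk _).continuous_iff]
        have : ⇑e' ∘ (QuotientGroup.mk : G₁ → _) = QuotientGroup.mk ∘ ⇑e := funext fun x => rfl
        rw [this]
        exact Continuous.comp QuotientGroup.continuous_mk h1
      · rw [(QuotientGroup.isQuotientMap_mk _).continuous_iff]
        have : ⇑e'.symm ∘ (QuotientGroup.mk : G₂ → _) = QuotientGroup.mk ∘ ⇑e.symm := funext fun x => rfl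
        rw [this]
        exact Continuous.comp QuotientGroup.continuous_mk h2

theorem ssgp_dense_aux : ∀ (n : ℕ) (G : Type u) [Group G] [TopologicalSpace G]
    [IsTopologicalGroup G] [T2Space G] (K : Subgroup G), Dense (K : Set G) →
    SSGP n K → SSGP n G
  | 0, G, _, _, _, _, K, hdense, hK => by
    rw [SSGP] at hK ⊢
    have hsub : (K : Set G) ⊆ {1} := by
      intro k hk
      have : (⟨k, hk⟩ : K) = ⟨1, K.one_mem⟩ := Subsingleton.elim _ _
      exact Subtype.ext_iff.mp this
    have huniv : (Set.univ : Set G) ⊆ {1} := by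
      rw [← hdense.closure_eq]
      exact closure_minimal hsub isClosed_singleton
    exact ⟨fun a b => by
      have ha : a = 1 := huniv (Set.mem_univ a)
      have hb : b = 1 := huniv (Set.mem_univ b)
      rw [ha, hb]⟩
  | n + 1, G, _, _, _, _, K, hdense, hK => by
    rw [SSGP] at hK ⊢
    intro U hU
    have hUK : (Subtype.val ⁻¹' U : Set K) ∈ nhds (1 : K) :=
      continuous_subtype_val.continuousAt.preimage_mem_nhds hU
    obtain ⟨𝓗K, hsub, hNK, hq⟩ := hK _ hUK
    refine ⟨(Subgroup.map K.subtype) '' 𝓗K, ?_, ?_⟩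
    · rintro H ⟨H₁, hH₁, rfl⟩ x ⟨y, hy, rfl⟩
      exact hsub H₁ hH₁ hy
    · set SK : Set K := ⋃ H ∈ 𝓗K, (H : Set K) with hSK
      set S : Set G := ⋃ H ∈ (Subgroup.map K.subtype) '' 𝓗K, (H : Set G) with hSdef
      have hS : S = Subtype.val '' SK := by
        rw [hSK, hSdef, Set.biUnion_image, Set.image_iUnion₂]
        rfl
      set NK := (Subgroup.closure SK).topologicalClosure with hNKdef
      set N := (Subgroup.closure S).topologicalClosure with hNdef
      -- the subgroup generated by S in G is the image of the one generated in K
      have hLmap : (Subgroup.closure SK).map K.subtype = Subgroup.closure S := by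
        rw [MonoidHom.map_closure, hS]
        rfl
      -- fact (1) : NK = val ⁻¹' N
      have hfact1 : (NK : Set K) = Subtype.val ⁻¹' (N : Set G) := by
        rw [hNKdef, hNdef, Subgroup.topologicalClosure_coe, Subgroup.topologicalClosure_coe,
          Topology.IsEmbedding.subtypeVal.closure_eq_preimage_closure_image, ← hLmap, Subgroup.coe_map]
        rfl
      -- fact (2) : closure (val '' NK) = N
      have hfact2 : closure (Subtype.val '' (NK : Set K)) = (N : Set G) := by
        apply Set.Subset.antisymm
        · apply closure_minimal _ (Subgroup.isClosed_topologicalClosure _)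
          rw [hfact1]
          exact Set.image_preimage_subset _ _
        · rw [hNdef, Subgroup.topologicalClosure_coe]
          apply closure_mono
          rw [← hLmap, Subgroup.coe_map]
          exact Set.image_mono (Subgroup.le_topologicalClosure _)
      -- N is normal
      have hNnormal : N.Normal := by
        constructor
        intro m hm g
        have stepA : ∀ m₀ ∈ Subtype.val '' (NK : Set K), ∀ g : G, g * m₀ * g⁻¹ ∈ N := by
          rintro m₀ ⟨k₀, hk₀, rfl⟩ g
          have hcl : IsClosed {x : G | x * (k₀ : G) * x⁻¹ ∈ (N : Set G)} :=
            (Subgroup.isClosed_topologicalClosure _).preimage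
              (by fun_prop : Continuous fun x : G => x * (k₀ : G) * x⁻¹)
          have hKsub : (K : Set G) ⊆ {x : G | x * (k₀ : G) * x⁻¹ ∈ (N : Set G)} := by
            intro k hk
            have : (⟨k, hk⟩ : K) * k₀ * (⟨k, hk⟩ : K)⁻¹ ∈ NK := hNK.conj_mem k₀ hk₀ ⟨k, hk⟩
            have hmem : (k * (k₀ : G) * k⁻¹) ∈ Subtype.val '' (NK : Set K) :=
              ⟨_, this, rfl⟩
            rw [← hfact2]
            exact subset_closure hmem
          have : (Set.univ : Set G) ⊆ {x : G | x * (k₀ : G) * x⁻¹ ∈ (N : Set G)} := by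
            rw [← hdense.closure_eq]
            exact closure_minimal hKsub hcl
          exact this (Set.mem_univ g)
        have hcl2 : IsClosed {y : G | g * y * g⁻¹ ∈ (N : Set G)} :=
          (Subgroup.isClosed_topologicalClosure _).preimage
            (by fun_prop : Continuous fun y : G => g * y * g⁻¹)
        have : closure (Subtype.val '' (NK : Set K)) ⊆ {y : G | g * y * g⁻¹ ∈ (N : Set G)} :=
          closure_minimal (fun y hy => stepA y hy g) hcl2
        rw [hfact2] at this
        exact this hm
      refine ⟨hNnormal, ?_⟩
      haveI := hNK
      haveI := hNnormal
      haveI : IsClosed (N : Set G) := Subgroup.isClosed_topologicalClosure _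
      set K' : Subgroup (G ⧸ N) := K.map (QuotientGroup.mk' N) with hK'def
      have hK'dense : Dense (K' : Set (G ⧸ N)) := by
        have h1 : (K' : Set (G ⧸ N)) = QuotientGroup.mk '' (K : Set G) := by
          rw [hK'def, Subgroup.coe_map]; rfl
        rw [h1, dense_iff_closure_eq]
        apply Set.eq_univ_of_univ_subset
        calc (Set.univ : Set (G ⧸ N))
            = QuotientGroup.mk '' (Set.univ : Set G) :=
              (Set.image_univ.trans QuotientGroup.mk_surjective.range_eq).symm
          _ = QuotientGroup.mk '' closure (K : Set G) := by rw [hdense.closure_eq]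
          _ ⊆ closure (QuotientGroup.mk '' (K : Set G)) :=
              image_closure_subset_closure_image QuotientGroup.continuous_mk
      have hmemK' : ∀ k : K, (QuotientGroup.mk (k : G) : G ⧸ N) ∈ K' := fun k => ⟨k.1, k.2, rfl⟩
      set φ : K →* K' :=
        MonoidHom.codRestrict ((QuotientGroup.mk' N).comp K.subtype) K' hmemK' with hφ
      have hmemN : ∀ x : K, x ∈ NK ↔ (x : G) ∈ N := by
        intro x
        constructor
        · intro hx
          have : (x : K) ∈ (NK : Set K) := hx
          rw [hfact1] at this
          exact this
        · intro hx
          have : (x : K) ∈ (Subtype.val ⁻¹' (N : Set G)) := hx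
          rw [← hfact1] at this
          exact this
      have hker : ∀ x : K, x ∈ NK → φ x = 1 := by
        intro x hx
        apply Subtype.ext
        exact (QuotientGroup.eq_one_iff _).mpr ((hmemN x).mp hx)
      set ψ := QuotientGroup.lift NK φ hker with hψ
      have hinj : Function.Injective ψ := by
        intro a b
        obtain ⟨x, rfl⟩ := QuotientGroup.mk_surjective a
        obtain ⟨y, rfl⟩ := QuotientGroup.mk_surjective b
        intro hxy
        have hval : (QuotientGroup.mk ((x : G)) : G ⧸ N) = QuotientGroup.mk ((y : G)) :=
          congrArg Subtype.val hxy
        rw [QuotientGroup.eq] at hval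
        rw [QuotientGroup.eq]
        exact (hmemN (x⁻¹ * y)).mpr hval
      have hsurj : Function.Surjective ψ := by
        rintro ⟨q, g, hg, rfl⟩
        exact ⟨QuotientGroup.mk (⟨g, hg⟩ : K), Subtype.ext rfl⟩
      set eiso := MulEquiv.ofBijective ψ ⟨hinj, hsurj⟩ with heiso
      have hcont : Continuous eiso := by
        rw [(QuotientGroup.isQuotientMap_mk NK).continuous_iff]
        show Continuous fun k : K => (⟨QuotientGroup.mk (k : G), hmemK' k⟩ : K')
        exact Continuous.subtype_mk (QuotientGroup.continuous_mk.comp continuous_subtype_val) _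
      have hcontsymm : Continuous eiso.symm := by
        rw [continuous_def]
        intro V hV
        have himg : eiso '' V = eiso.symm ⁻¹' V := Equiv.image_eq_preimage_symm eiso.toEquiv V
        rw [← himg]
        have hVpre : IsOpen ((QuotientGroup.mk : K → K ⧸ NK) ⁻¹' V) :=
          hV.preimage QuotientGroup.continuous_mk
        obtain ⟨W, hW, hWeq⟩ := isOpen_induced_iff.mp hVpre
        have hclaim : eiso '' V = (Subtype.val : K' → G ⧸ N) ⁻¹' (QuotientGroup.mk '' W) := by
          apply Set.Subset.antisymm
          · rintro _ ⟨v, hv, rfl⟩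
            obtain ⟨k, rfl⟩ := QuotientGroup.mk_surjective v
            have hk : k ∈ (QuotientGroup.mk ⁻¹' V : Set K) := hv
            rw [← hWeq] at hk
            exact ⟨(k : G), hk, rfl⟩
          · rintro ⟨q, hqK'⟩ hq2
            obtain ⟨g, hgK, rfl⟩ := hqK'
            obtain ⟨w, hw, hweq⟩ := hq2
            have hn : w⁻¹ * g ∈ N := QuotientGroup.eq.mp hweq
            have hopen : IsOpen {m : G | g * m⁻¹ ∈ W} := hW.preimage (by fun_prop)
            have hmem0 : (w⁻¹ * g) ∈ {m : G | g * m⁻¹ ∈ W} := by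
              have : g * (w⁻¹ * g)⁻¹ = w := by group
              show g * (w⁻¹ * g)⁻¹ ∈ W
              rw [this]; exact hw
            have hclosure : (w⁻¹ * g) ∈ closure (Subtype.val '' (NK : Set K)) := by
              rw [hfact2]; exact hn
            obtain ⟨n', hn'o, hn'img⟩ := mem_closure_iff.mp hclosure _ hopen hmem0
            obtain ⟨k', hk'NK, rfl⟩ := hn'img
            have hgn'K : g * (k' : G)⁻¹ ∈ K := K.mul_mem hgK (K.inv_mem k'.2)
            refine ⟨QuotientGroup.mk (⟨g * (k' : G)⁻¹, hgn'K⟩ : K), ?_, ?_⟩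
            · have : (⟨g * (k' : G)⁻¹, hgn'K⟩ : K) ∈ (QuotientGroup.mk ⁻¹' V : Set K) := by
                rw [← hWeq]
                exact hn'o
              exact this
            · apply Subtype.ext
              show (QuotientGroup.mk (g * (k' : G)⁻¹) : G ⧸ N) = QuotientGroup.mk g
              rw [QuotientGroup.eq]
              have heq : (g * (k' : G)⁻¹)⁻¹ * g = (k' : G) := by group
              rw [heq]
              have : (k' : G) ∈ closure (Subtype.val '' (NK : Set K)) :=
                subset_closure ⟨k', hk'NK, rfl⟩
              rw [hfact2] at this
              exact this
        rw [hclaim]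
        exact (QuotientGroup.isOpenMap_coe W hW).preimage continuous_subtype_val
      have hK'ssgp : SSGP n K' := ssgp_congr n eiso hcont hcontsymm hq
      exact ssgp_dense_aux n (G ⧸ N) K' hK'dense hK'ssgp


/-- If a dense subgroup `K` of a Hausdorff topological group `G` belongs to
`SSGP(n)` in the subspace topology, then `G ∈ SSGP(n)`. -/
theorem ssgp_of_dense_subgroup (n : ℕ) (G : Type u) [Group G] [TopologicalSpace G]
    [IsTopologicalGroup G] [T2Space G] (K : Subgroup G) (hdense : Dense (K : Set G))
    (hK : SSGP n K) : SSGP n G := by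
  exact ssgp_dense_aux n G K hdense hK
end

section
/- Let (G_i)_{i ∈ I} be a family of Hausdorff topological groups with G_i ∈ SSGP(n) for each i ∈ I. Then the product group ∏_{i ∈ I} G_i (with the product topology) belongs to SSGP(n), and the direct sum ⊕_{i ∈ I} G_i (the subgroup of the product consisting of elements with all but finitely many coordinates equal to the identity, with the topology inherited from the product) belongs to SSGP(n). -/
open Function Set


universe u v

/-- The direct sum of a family of groups: the subgroup of the product
consisting of the elements with all but finitely many coordinates equal to the
identity. -/
def directSumSubgroup (I : Type v) (G : I → Type u) [∀ i, Group (G i)] :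
    Subgroup (∀ i, G i) where
  carrier := {x | {i | x i ≠ 1}.Finite}
  one_mem' := by
    simp
  mul_mem' := by
    intro a b ha hb
    refine Set.Finite.subset (ha.union hb) fun i hi => ?_
    by_contra hcon
    simp only [Set.mem_union, Set.mem_setOf_eq, not_or, not_not] at hcon
    exact hi (by simp [Pi.mul_apply, hcon.1, hcon.2])
  inv_mem' := by
    intro a ha
    show {i | a⁻¹ i ≠ 1}.Finite
    have h : {i | a⁻¹ i ≠ 1} = {i | a i ≠ 1} := by ext i; simp
    rw [h]; exact ha

theorem SSGP.congr_quot (n : ℕ) {G : Type u} [Group G] [TopologicalSpace G] [IsTopologicalGroup G]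
    {A B : Subgroup G} (h : A = B) [A.Normal] [hB : B.Normal]
    (hs : SSGP n (G ⧸ A)) : SSGP n (G ⧸ B) := by subst h; exact hs

theorem ssgp_of_openSurj : ∀ (n : ℕ) {G : Type u} {H : Type v}
    [Group G] [TopologicalSpace G] [IsTopologicalGroup G]
    [Group H] [TopologicalSpace H] [IsTopologicalGroup H] (φ : G →* H),
    Continuous φ → IsOpenMap φ → Function.Surjective φ → SSGP n G → SSGP n H := by
  intro n
  induction n with
  | zero =>
    intro G H _ _ _ _ _ _ φ _ _ hs hG
    have : Subsingleton G := hG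
    exact ⟨fun a b => by
      obtain ⟨x, rfl⟩ := hs a; obtain ⟨y, rfl⟩ := hs b; rw [Subsingleton.elim x y]⟩
  | succ n IH =>
    intro G H _ _ _ _ _ _ φ hc ho hs hG
    intro U hU
    have hU' : φ ⁻¹' U ∈ nhds (1 : G) := by
      have := hc.continuousAt (x := (1 : G))
      rw [ContinuousAt, map_one] at this
      exact this hU
    obtain ⟨𝓗, hsub, hN, hq⟩ := hG _ hU'
    set S : Set G := ⋃ K ∈ 𝓗, (K : Set G) with hS
    set N : Subgroup G := (Subgroup.closure S).topologicalClosure with hNdef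
    refine ⟨(Subgroup.map φ) '' 𝓗, ?_, ?_⟩
    · rintro K ⟨L, hL, rfl⟩ y hy
      rw [SetLike.mem_coe, Subgroup.mem_map] at hy
      obtain ⟨x, hx, rfl⟩ := hy
      exact hsub L hL hx
    · have hS' : (⋃ K ∈ (Subgroup.map φ) '' 𝓗, (K : Set H)) = φ '' S := by
        ext y
        simp only [mem_iUnion, SetLike.mem_coe, Set.mem_image, hS]
        constructor
        · rintro ⟨K, ⟨L, hL, rfl⟩, hy⟩
          obtain ⟨x, hx, rfl⟩ := Subgroup.mem_map.mp hy
          exact ⟨x, ⟨L, hL, hx⟩, rfl⟩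
        · rintro ⟨x, hx, rfl⟩
          obtain ⟨L, hL, hx⟩ := hx
          exact ⟨L.map φ, ⟨L, hL, rfl⟩, Subgroup.mem_map.2 ⟨x, hx, rfl⟩⟩
      have hcl : Subgroup.closure (⋃ K ∈ (Subgroup.map φ) '' 𝓗, (K : Set H))
          = (Subgroup.closure S).map φ := by
        rw [hS', MonoidHom.map_closure]
      haveI : N.Normal := hN
      haveI : (N.map φ).Normal := hN.map φ hs
      haveI hMn : ((N.map φ).topologicalClosure).Normal :=
        Subgroup.is_normal_topologicalClosure _
      have hEq : (Subgroup.closure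
            (⋃ K ∈ (Subgroup.map φ) '' 𝓗, (K : Set H))).topologicalClosure
          = (N.map φ).topologicalClosure := by
        rw [hcl]
        apply le_antisymm
        · exact Subgroup.topologicalClosure_minimal _
            (le_trans (Subgroup.map_mono (Subgroup.le_topologicalClosure _))
              (Subgroup.le_topologicalClosure _))
            (Subgroup.isClosed_topologicalClosure _)
        · apply Subgroup.topologicalClosure_minimal
          · rintro y ⟨x, hx, rfl⟩
            have hx' : x ∈ closure ((Subgroup.closure S : Set G)) := hx
            have : φ x ∈ closure (φ '' (Subgroup.closure S : Set G)) :=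
              image_closure_subset_closure_image hc ⟨x, hx', rfl⟩
            have h2 : φ '' (Subgroup.closure S : Set G)
                = (((Subgroup.closure S).map φ : Subgroup H) : Set H) :=
              (Subgroup.coe_map φ _).symm
            rw [h2] at this
            exact this
          · exact Subgroup.isClosed_topologicalClosure _
      have hNn : (Subgroup.closure
            (⋃ K ∈ (Subgroup.map φ) '' 𝓗, (K : Set H))).topologicalClosure.Normal := by
        rw [hEq]; exact hMn
      haveI := hNn
      -- build induced map G ⧸ N →* H ⧸ (N.map φ).topologicalClosure
      set M : Subgroup H := (N.map φ).topologicalClosure with hM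
      have hle : N ≤ M.comap φ := fun x hx =>
        Subgroup.le_topologicalClosure _ (Subgroup.mem_map.2 ⟨x, hx, rfl⟩)
      set ψ : G ⧸ N →* H ⧸ M := QuotientGroup.map N M φ hle with hψ
      have hψmk : ∀ x : G, ψ (QuotientGroup.mk x) = QuotientGroup.mk (φ x) :=
        fun x => QuotientGroup.map_mk N M φ hle x
      have hψc : Continuous ψ := by
        rw [(QuotientGroup.isQuotientMap_mk N).continuous_iff]
        have : (ψ ∘ QuotientGroup.mk) = (QuotientGroup.mk ∘ φ) := funext hψmk
        rw [this]
        exact Continuous.comp (QuotientGroup.isQuotientMap_mk M).continuous hc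
      have hψs : Function.Surjective ψ := by
        intro y
        induction y using QuotientGroup.induction_on with
        | H h => obtain ⟨x, rfl⟩ := hs h; exact ⟨QuotientGroup.mk x, hψmk x⟩
      have hψo : IsOpenMap ψ := by
        intro s hso
        have himg : ψ '' s
            = QuotientGroup.mk '' (φ '' ((QuotientGroup.mk : G → G ⧸ N) ⁻¹' s)) := by
          ext y
          constructor
          · rintro ⟨a, ha, rfl⟩
            induction a using QuotientGroup.induction_on with
            | H x => exact ⟨φ x, ⟨x, ha, rfl⟩, (hψmk x).symm⟩
          · rintro ⟨-, ⟨x, hx, rfl⟩, rfl⟩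
            exact ⟨QuotientGroup.mk x, hx, hψmk x⟩
        rw [himg]
        exact QuotientGroup.isOpenMap_coe (N := M) _
          (ho _ (hso.preimage (QuotientGroup.isQuotientMap_mk N).continuous))
      exact ⟨hNn, SSGP.congr_quot n hEq.symm (IH ψ hψc hψo hψs hq)⟩

theorem ssgp_ker (n : ℕ) {G : Type u} {H : Type v}
    [Group G] [TopologicalSpace G] [IsTopologicalGroup G]
    [Group H] [TopologicalSpace H] [IsTopologicalGroup H] (φ : G →* H)
    (hc : Continuous φ) (ho : IsOpenMap φ) (hs : Function.Surjective φ)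
    (hH : SSGP n H) : SSGP n (G ⧸ φ.ker) := by
  set ψ : G ⧸ φ.ker →* H := QuotientGroup.kerLift φ with hψ
  have hψmk : ∀ x : G, ψ (QuotientGroup.mk x) = φ x := fun x => QuotientGroup.kerLift_mk φ x
  have hinj : Function.Injective ψ := QuotientGroup.kerLift_injective φ
  have hsurj : Function.Surjective ψ := by
    intro y; obtain ⟨x, rfl⟩ := hs y; exact ⟨QuotientGroup.mk x, hψmk x⟩
  have hcont : Continuous ψ := by
    rw [(QuotientGroup.isQuotientMap_mk φ.ker).continuous_iff]
    have : (ψ ∘ QuotientGroup.mk) = φ := funext hψmk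
    rw [this]; exact hc
  have hopen : IsOpenMap ψ := by
    intro s hso
    have himg : ψ '' s = φ '' ((QuotientGroup.mk : G → G ⧸ φ.ker) ⁻¹' s) := by
      ext y
      constructor
      · rintro ⟨a, ha, rfl⟩
        induction a using QuotientGroup.induction_on with
        | H x => exact ⟨x, ha, (hψmk x).symm⟩
      · rintro ⟨x, hx, rfl⟩
        exact ⟨QuotientGroup.mk x, hx, hψmk x⟩
    rw [himg]
    exact ho _ (hso.preimage (QuotientGroup.isQuotientMap_mk φ.ker).continuous)
  set e : (G ⧸ φ.ker) ≃* H := MulEquiv.ofBijective ψ ⟨hinj, hsurj⟩ with he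
  let homeo : (G ⧸ φ.ker) ≃ₜ H :=
    Equiv.toHomeomorphOfContinuousOpen e.toEquiv hcont hopen
  exact ssgp_of_openSurj n e.symm.toMonoidHom
    (show Continuous ⇑homeo.symm from homeo.symm.continuous)
    (show IsOpenMap ⇑homeo.symm from homeo.symm.isOpenMap)
    e.symm.surjective hH

theorem mem_of_finite_support {I : Type v} {G : I → Type u} [∀ i, Group (G i)] [DecidableEq I]
    (K : ∀ i, Subgroup (G i)) (T : Subgroup (∀ i, G i))
    (hT : ∀ (j : I) (a : G j), a ∈ K j → Pi.mulSingle j a ∈ T) (C : Finset I) :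
    ∀ x : ∀ i, G i, (∀ j, x j ∈ K j) → (∀ j, j ∉ C → x j = 1) → x ∈ T := by
  induction C using Finset.induction_on with
  | empty =>
    intro x _ h1
    have : x = 1 := funext fun j => h1 j (Finset.notMem_empty j)
    rw [this]; exact one_mem T
  | @insert a C ha ih =>
    intro x hx h1
    have hdec : x = Pi.mulSingle a (x a) * Function.update x a 1 := by
      funext j
      by_cases hj : j = a
      · subst hj
        simp [Pi.mulSingle_eq_same, Function.update_self]
      · simp [Pi.mulSingle_eq_of_ne hj, Function.update_of_ne hj]
    rw [hdec]
    refine mul_mem (hT a _ (hx a)) (ih _ (fun j => ?_) (fun j hj => ?_))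
    · by_cases hj : j = a
      · subst hj; simp only [Function.update_self]; exact one_mem _
      · rw [Function.update_of_ne hj]; exact hx j
    · by_cases hja : j = a
      · subst hja; simp
      · rw [Function.update_of_ne hja]
        exact h1 j (by simp [Finset.mem_insert, hja, hj])

theorem ssgp_aux : ∀ (n : ℕ) (I : Type v) (G : I → Type u) [∀ i, Group (G i)]
    [∀ i, TopologicalSpace (G i)] [∀ i, IsTopologicalGroup (G i)],
    (∀ i, SSGP n (G i)) → SSGP n (∀ i, G i) ∧ SSGP n (directSumSubgroup I G) := by
  intro n
  induction n with
  | zero =>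
    intro I G _ _ _ h
    haveI : ∀ i, Subsingleton (G i) := h
    exact ⟨⟨fun a b => funext fun i => Subsingleton.elim _ _⟩,
      ⟨fun a b => Subtype.ext (funext fun i => Subsingleton.elim _ _)⟩⟩
  | succ n IH =>
    intro I G _ _ _ h
    classical
    constructor
    · -- product case
      intro U hU
      rw [nhds_pi] at hU
      obtain ⟨Fs, hFs, t, ht, htU⟩ := Filter.mem_pi.mp hU
      have hdata : ∀ i, ∃ 𝓗i : Set (Subgroup (G i)),
          (∀ H ∈ 𝓗i, (H : Set (G i)) ⊆ (if i ∈ Fs then t i else Set.univ)) ∧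
          ∃ hN : (Subgroup.closure (⋃ H ∈ 𝓗i, (H : Set (G i)))).topologicalClosure.Normal,
            haveI := hN
            SSGP n (G i ⧸ (Subgroup.closure (⋃ H ∈ 𝓗i, (H : Set (G i)))).topologicalClosure) := by
        intro i
        refine h i _ ?_
        by_cases hi : i ∈ Fs
        · simpa [hi] using ht i
        · simp [hi]
      choose 𝓗i hsubi hNi hqi using hdata
      set gen : ∀ i, Subgroup (G i) :=
        fun i => Subgroup.closure (⋃ H ∈ 𝓗i i, (H : Set (G i))) with hgen
      set Nn : ∀ i, Subgroup (G i) := fun i => (gen i).topologicalClosure with hNn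
      haveI : ∀ i, (Nn i).Normal := hNi
      have hqi' : ∀ i, SSGP n (G i ⧸ Nn i) := hqi
      refine ⟨⋃ i, (fun H => Subgroup.map (MonoidHom.mulSingle G i) H) '' 𝓗i i, ?_, ?_⟩
      · rintro K hK x hx
        obtain ⟨s, ⟨i, rfl⟩, hKs⟩ := hK
        obtain ⟨H, hH, rfl⟩ := hKs
        obtain ⟨g, hg, rfl⟩ := Subgroup.mem_map.mp hx
        refine htU ?_
        intro j hj
        by_cases hij : j = i
        · subst hij
          have := hsubi j H hH hg
          rw [if_pos hj] at this
          rw [show ((MonoidHom.mulSingle G j) g) j = g from Pi.mulSingle_eq_same j g]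
          exact this
        · show (MonoidHom.mulSingle G i g) j ∈ t j
          have : (MonoidHom.mulSingle G i g) j = 1 := Pi.mulSingle_eq_of_ne hij g
          rw [this]
          exact mem_of_mem_nhds (ht j)
      · -- identify the closure
        have hT : ∀ (j : I) (a : G j), a ∈ gen j →
            Pi.mulSingle j a ∈ Subgroup.closure
              (⋃ K ∈ (⋃ i, (fun H => Subgroup.map (MonoidHom.mulSingle G i) H) '' 𝓗i i),
                (K : Set (∀ i, G i))) := by
          intro j a ha
          have h1 : Pi.mulSingle j a ∈ (gen j).map (MonoidHom.mulSingle G j) :=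
            Subgroup.mem_map.mpr ⟨a, ha, rfl⟩
          have h2 : (gen j).map (MonoidHom.mulSingle G j) ≤ Subgroup.closure
              (⋃ K ∈ (⋃ i, (fun H => Subgroup.map (MonoidHom.mulSingle G i) H) '' 𝓗i i),
                (K : Set (∀ i, G i))) := by
            rw [hgen, MonoidHom.map_closure]
            apply Subgroup.closure_mono
            rintro x ⟨y, hy, rfl⟩
            simp only [Set.mem_iUnion, SetLike.mem_coe] at hy
            obtain ⟨H, hH, hy⟩ := hy
            refine Set.mem_biUnion ?_ (Subgroup.mem_map.mpr ⟨y, hy, rfl⟩)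
            exact Set.mem_iUnion.mpr ⟨j, Set.mem_image_of_mem _ hH⟩
          exact h2 h1
        have hkey : (Subgroup.closure
              (⋃ K ∈ (⋃ i, (fun H => Subgroup.map (MonoidHom.mulSingle G i) H) '' 𝓗i i),
                (K : Set (∀ i, G i)))).topologicalClosure = Subgroup.pi Set.univ Nn := by
          apply le_antisymm
          · apply Subgroup.topologicalClosure_minimal
            · rw [Subgroup.closure_le]
              rintro x hx
              simp only [Set.mem_iUnion, Set.mem_image, SetLike.mem_coe] at hx
              obtain ⟨K, ⟨i, H, hH, rfl⟩, hxK⟩ := hx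
              obtain ⟨g, hg, rfl⟩ := Subgroup.mem_map.mp hxK
              rw [SetLike.mem_coe, Subgroup.mem_pi]
              intro j _
              by_cases hij : j = i
              · subst hij
                show (MonoidHom.mulSingle G j g) j ∈ Nn j
                rw [show (MonoidHom.mulSingle G j g) j = g from Pi.mulSingle_eq_same j g]
                exact Subgroup.le_topologicalClosure _
                  (Subgroup.subset_closure (Set.mem_biUnion hH hg))
              · rw [show ((MonoidHom.mulSingle G i) g) j = 1 from Pi.mulSingle_eq_of_ne hij g]
                exact one_mem _
            · rw [Subgroup.coe_pi]
              exact isClosed_set_pi fun i _ => (gen i).isClosed_topologicalClosure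
          · intro x hx
            show x ∈ closure ((Subgroup.closure
              (⋃ K ∈ (⋃ i, (fun H => Subgroup.map (MonoidHom.mulSingle G i) H) '' 𝓗i i),
                (K : Set (∀ i, G i))) : Subgroup (∀ i, G i)) : Set (∀ i, G i))
            rw [mem_closure_iff]
            intro O hO hxO
            obtain ⟨C, W, hW, hsubO⟩ := isOpen_pi_iff.mp hO x hxO
            have hpick : ∀ j, j ∈ C → ∃ g, g ∈ W j ∧ g ∈ gen j := by
              intro j hj
              have hxj : x j ∈ closure ((gen j : Subgroup (G j)) : Set (G j)) :=
                (Subgroup.mem_pi Set.univ).mp hx j (Set.mem_univ j)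
              obtain ⟨g, hg1, hg2⟩ :=
                mem_closure_iff.mp hxj (W j) (hW j hj).1 (hW j hj).2
              exact ⟨g, hg1, hg2⟩
            choose! g hgW hggen using hpick
            refine ⟨fun j => if hj : j ∈ C then g j else 1, ?_, ?_⟩
            · apply hsubO
              intro j hj
              simp only [Finset.mem_coe] at hj
              simp only [dif_pos hj]
              exact hgW j hj
            · refine mem_of_finite_support gen _ hT C _ (fun j => ?_) (fun j hj => ?_)
              · by_cases hj : j ∈ C
                · simp only [dif_pos hj]; exact hggen j hj
                · simp only [dif_neg hj]; exact one_mem _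
              · simp only [dif_neg hj]
        haveI hpin : (Subgroup.pi Set.univ Nn).Normal := by
          constructor
          intro m hm g
          rw [Subgroup.mem_pi]
          intro j _
          have : (g * m * g⁻¹) j = g j * m j * (g j)⁻¹ := rfl
          rw [this]
          exact (hNi j).conj_mem _ ((Subgroup.mem_pi Set.univ).mp hm j (Set.mem_univ j)) _
        set φ : (∀ i, G i) →* (∀ i, G i ⧸ Nn i) :=
          Pi.monoidHom (fun i => (QuotientGroup.mk' (Nn i)).comp (Pi.evalMonoidHom G i)) with hφ
        have hker : φ.ker = Subgroup.pi Set.univ Nn := by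
          ext x
          simp only [MonoidHom.mem_ker, Subgroup.mem_pi, Set.mem_univ, forall_true_left]
          constructor
          · intro hx j
            have h1 : (QuotientGroup.mk (x j) : G j ⧸ Nn j) = 1 := congrFun hx j
            exact (QuotientGroup.eq_one_iff _).mp h1
          · intro hx
            funext j
            show (QuotientGroup.mk (x j) : G j ⧸ Nn j) = 1
            exact (QuotientGroup.eq_one_iff _).mpr (hx j)
        have hcont : Continuous φ :=
          continuous_pi fun i =>
            ((QuotientGroup.isQuotientMap_mk (Nn i)).continuous).comp (continuous_apply i)
        have hsurj : Function.Surjective φ := by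
          intro y
          have : ∀ i, ∃ a : G i, QuotientGroup.mk a = y i :=
            fun i => QuotientGroup.mk'_surjective (Nn i) (y i)
          choose a ha using this
          exact ⟨a, funext ha⟩
        have hopen : IsOpenMap φ := by
          have : IsOpenMap (Pi.map (fun i (a : G i) => (QuotientGroup.mk a : G i ⧸ Nn i))) :=
            IsOpenMap.piMap (fun i => QuotientGroup.isOpenMap_coe)
              (Filter.Eventually.of_forall fun i => QuotientGroup.mk'_surjective (Nn i))
          exact this
        haveI hNormalX : (Subgroup.closure
              (⋃ K ∈ (⋃ i, (fun H => Subgroup.map (MonoidHom.mulSingle G i) H) '' 𝓗i i),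
                (K : Set (∀ i, G i)))).topologicalClosure.Normal := by
          rw [hkey]; exact hpin
        refine ⟨hNormalX, ?_⟩
        exact SSGP.congr_quot n (hker.trans hkey.symm)
          (ssgp_ker n φ hcont hopen hsurj (IH I (fun i => G i ⧸ Nn i) hqi').1)
    · -- direct sum case
      intro U hU
      rw [nhds_subtype] at hU
      obtain ⟨V, hV, hVU⟩ := Filter.mem_comap.mp hU
      rw [OneMemClass.coe_one, nhds_pi] at hV
      obtain ⟨Fs, hFs, t, ht, htV⟩ := Filter.mem_pi.mp hV
      have hdata : ∀ i, ∃ 𝓗i : Set (Subgroup (G i)),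
          (∀ H ∈ 𝓗i, (H : Set (G i)) ⊆ (if i ∈ Fs then t i else Set.univ)) ∧
          ∃ hN : (Subgroup.closure (⋃ H ∈ 𝓗i, (H : Set (G i)))).topologicalClosure.Normal,
            haveI := hN
            SSGP n (G i ⧸ (Subgroup.closure (⋃ H ∈ 𝓗i, (H : Set (G i)))).topologicalClosure) := by
        intro i
        refine h i _ ?_
        by_cases hi : i ∈ Fs
        · simpa [hi] using ht i
        · simp [hi]
      choose 𝓗i hsubi hNi hqi using hdata
      set gen : ∀ i, Subgroup (G i) :=
        fun i => Subgroup.closure (⋃ H ∈ 𝓗i i, (H : Set (G i))) with hgen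
      set Nn : ∀ i, Subgroup (G i) := fun i => (gen i).topologicalClosure with hNn
      haveI : ∀ i, (Nn i).Normal := hNi
      have hqi' : ∀ i, SSGP n (G i ⧸ Nn i) := hqi
      have hmemD : ∀ (i : I) (a : G i), Pi.mulSingle i a ∈ directSumSubgroup I G := by
        intro i a
        show {j | Pi.mulSingle i a j ≠ 1}.Finite
        apply (Set.finite_singleton i).subset
        intro j hj
        by_contra hji
        exact hj (Pi.mulSingle_eq_of_ne (by simpa using hji) a)
      set emb : ∀ i, G i →* ↥(directSumSubgroup I G) :=
        fun i => (MonoidHom.mulSingle G i).codRestrict _ (hmemD i) with hemb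
      refine ⟨⋃ i, (fun H => Subgroup.map (emb i) H) '' 𝓗i i, ?_, ?_⟩
      · rintro K hK x hx
        obtain ⟨s, ⟨i, rfl⟩, hKs⟩ := hK
        obtain ⟨H, hH, rfl⟩ := hKs
        obtain ⟨g, hg, rfl⟩ := Subgroup.mem_map.mp hx
        apply hVU
        show ((emb i) g : ∀ j, G j) ∈ V
        apply htV
        intro j hj
        by_cases hij : j = i
        · subst hij
          have := hsubi j H hH hg
          rw [if_pos hj] at this
          rw [show (((emb j) g : ∀ l, G l)) j = g from Pi.mulSingle_eq_same j g]
          exact this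
        · rw [show (((emb i) g : ∀ l, G l)) j = 1 from Pi.mulSingle_eq_of_ne hij g]
          exact mem_of_mem_nhds (ht j)
      · have hT : ∀ (j : I) (a : G j), a ∈ gen j →
            (emb j) a ∈ Subgroup.closure
              (⋃ K ∈ (⋃ i, (fun H => Subgroup.map (emb i) H) '' 𝓗i i),
                (K : Set ↥(directSumSubgroup I G))) := by
          intro j a ha
          have h1 : (emb j) a ∈ (gen j).map (emb j) := Subgroup.mem_map.mpr ⟨a, ha, rfl⟩
          have h2 : (gen j).map (emb j) ≤ Subgroup.closure
              (⋃ K ∈ (⋃ i, (fun H => Subgroup.map (emb i) H) '' 𝓗i i),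
                (K : Set ↥(directSumSubgroup I G))) := by
            rw [hgen, MonoidHom.map_closure]
            apply Subgroup.closure_mono
            rintro x ⟨y, hy, rfl⟩
            simp only [Set.mem_iUnion, SetLike.mem_coe] at hy
            obtain ⟨H, hH, hy⟩ := hy
            refine Set.mem_biUnion ?_ (Subgroup.mem_map.mpr ⟨y, hy, rfl⟩)
            exact Set.mem_iUnion.mpr ⟨j, Set.mem_image_of_mem _ hH⟩
          exact h2 h1
        have hkey : (Subgroup.closure
              (⋃ K ∈ (⋃ i, (fun H => Subgroup.map (emb i) H) '' 𝓗i i),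
                (K : Set ↥(directSumSubgroup I G)))).topologicalClosure
            = (Subgroup.pi Set.univ Nn).subgroupOf (directSumSubgroup I G) := by
          apply le_antisymm
          · apply Subgroup.topologicalClosure_minimal
            · rw [Subgroup.closure_le]
              rintro x hx
              simp only [Set.mem_iUnion, Set.mem_image, SetLike.mem_coe] at hx
              obtain ⟨K, ⟨i, H, hH, rfl⟩, hxK⟩ := hx
              obtain ⟨g, hg, rfl⟩ := Subgroup.mem_map.mp hxK
              rw [SetLike.mem_coe, Subgroup.mem_subgroupOf, Subgroup.mem_pi]
              intro j _
              by_cases hij : j = i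
              · subst hij
                rw [show (((emb j) g : ∀ l, G l)) j = g from Pi.mulSingle_eq_same j g]
                exact Subgroup.le_topologicalClosure _
                  (Subgroup.subset_closure (Set.mem_biUnion hH hg))
              · rw [show (((emb i) g : ∀ l, G l)) j = 1 from Pi.mulSingle_eq_of_ne hij g]
                exact one_mem _
            · have hco : (((Subgroup.pi Set.univ Nn).subgroupOf (directSumSubgroup I G)) :
                  Set ↥(directSumSubgroup I G))
                  = (Subtype.val) ⁻¹' ((Subgroup.pi Set.univ Nn) : Set (∀ i, G i)) :=
                Subgroup.coe_comap _ _
              rw [hco]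
              refine IsClosed.preimage continuous_subtype_val ?_
              rw [Subgroup.coe_pi]
              exact isClosed_set_pi fun i _ => (gen i).isClosed_topologicalClosure
          · intro x hx
            rw [Subgroup.mem_subgroupOf] at hx
            show x ∈ closure ((Subgroup.closure
              (⋃ K ∈ (⋃ i, (fun H => Subgroup.map (emb i) H) '' 𝓗i i),
                (K : Set ↥(directSumSubgroup I G))) : Subgroup ↥(directSumSubgroup I G)) :
                  Set ↥(directSumSubgroup I G))
            rw [mem_closure_iff]
            intro O hO hxO
            obtain ⟨W, hWopen, rfl⟩ := isOpen_induced_iff.mp hO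
            obtain ⟨C, W', hW', hsubW⟩ := isOpen_pi_iff.mp hWopen _ hxO
            have hpick : ∀ j, j ∈ C → ∃ g, g ∈ W' j ∧ g ∈ gen j := by
              intro j hj
              have hxj : (↑x : ∀ i, G i) j ∈ closure ((gen j : Subgroup (G j)) : Set (G j)) :=
                (Subgroup.mem_pi Set.univ).mp hx j (Set.mem_univ j)
              exact mem_closure_iff.mp hxj (W' j) (hW' j hj).1 (hW' j hj).2
            choose! g hgW hggen using hpick
            have hyD : (fun j => if hj : j ∈ C then g j else 1) ∈ directSumSubgroup I G := by
              show {j | (if hj : j ∈ C then g j else 1) ≠ 1}.Finite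
              apply C.finite_toSet.subset
              intro j hj
              simp only [Set.mem_setOf_eq] at hj
              rw [Finset.mem_coe]
              by_contra hjC
              exact hj (dif_neg hjC)
            refine ⟨⟨fun j => if hj : j ∈ C then g j else 1, hyD⟩, ?_, ?_⟩
            · show (⟨fun j => if hj : j ∈ C then g j else 1, hyD⟩ :
                ↥(directSumSubgroup I G)) ∈ Subtype.val ⁻¹' W
              apply hsubW
              intro j hj
              simp only [Finset.mem_coe] at hj
              show (if hj : j ∈ C then g j else 1) ∈ W' j
              simp only [dif_pos hj]
              exact hgW j hj
            · have hyT : (fun j => if hj : j ∈ C then g j else 1) ∈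
                  (Subgroup.closure
                    (⋃ K ∈ (⋃ i, (fun H => Subgroup.map (emb i) H) '' 𝓗i i),
                      (K : Set ↥(directSumSubgroup I G)))).map
                        (directSumSubgroup I G).subtype := by
                refine mem_of_finite_support gen _ ?_ C _ (fun j => ?_) (fun j hj => ?_)
                · intro j a ha
                  exact ⟨(emb j) a, hT j a ha, rfl⟩
                · by_cases hj : j ∈ C
                  · simp only [dif_pos hj]; exact hggen j hj
                  · simp only [dif_neg hj]; exact one_mem _
                · simp only [dif_neg hj]
              obtain ⟨z, hz, hzeq⟩ := Subgroup.mem_map.mp hyT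
              have hzx : z = ⟨fun j => if hj : j ∈ C then g j else 1, hyD⟩ := Subtype.ext hzeq
              rw [hzx] at hz
              exact hz
        haveI hpin : (Subgroup.pi Set.univ Nn).Normal := by
          constructor
          intro m hm gg
          rw [Subgroup.mem_pi]
          intro j _
          have : (gg * m * gg⁻¹) j = gg j * m j * (gg j)⁻¹ := rfl
          rw [this]
          exact (hNi j).conj_mem _ ((Subgroup.mem_pi Set.univ).mp hm j (Set.mem_univ j)) _
        haveI hpinD : ((Subgroup.pi Set.univ Nn).subgroupOf (directSumSubgroup I G)).Normal := by
          constructor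
          intro m hm gg
          rw [Subgroup.mem_subgroupOf] at hm ⊢
          have : ((gg * m * gg⁻¹ : ↥(directSumSubgroup I G)) : ∀ i, G i)
              = (↑gg : ∀ i, G i) * ↑m * (↑gg : ∀ i, G i)⁻¹ := rfl
          rw [this]
          exact hpin.conj_mem _ hm _
        set φ : ↥(directSumSubgroup I G) →* ↥(directSumSubgroup I (fun i => G i ⧸ Nn i)) :=
          MonoidHom.codRestrict
            ((Pi.monoidHom (fun i => (QuotientGroup.mk' (Nn i)).comp (Pi.evalMonoidHom G i))).comp
              (directSumSubgroup I G).subtype)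
            (directSumSubgroup I (fun i => G i ⧸ Nn i))
            (fun x => by
              show {i | (QuotientGroup.mk ((↑x : ∀ i, G i) i) : G i ⧸ Nn i) ≠ 1}.Finite
              apply Set.Finite.subset (x.2 : {i | (↑x : ∀ i, G i) i ≠ 1}.Finite)
              intro i hi
              simp only [Set.mem_setOf_eq] at hi ⊢
              intro h1
              exact hi (by rw [h1]; exact (QuotientGroup.eq_one_iff _).mpr (one_mem _))) with hφ
        have hker : φ.ker = (Subgroup.pi Set.univ Nn).subgroupOf (directSumSubgroup I G) := by
          ext x
          rw [MonoidHom.mem_ker, Subgroup.mem_subgroupOf, Subgroup.mem_pi]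
          constructor
          · intro hx j _
            have h1 : (QuotientGroup.mk ((↑x : ∀ i, G i) j) : G j ⧸ Nn j) = 1 :=
              congrFun (congrArg Subtype.val hx) j
            exact (QuotientGroup.eq_one_iff _).mp h1
          · intro hx
            apply Subtype.ext
            funext j
            show (QuotientGroup.mk ((↑x : ∀ i, G i) j) : G j ⧸ Nn j) = 1
            exact (QuotientGroup.eq_one_iff _).mpr (hx j (Set.mem_univ j))
        have hcont : Continuous φ :=
          Continuous.subtype_mk (continuous_pi fun i =>
            ((QuotientGroup.isQuotientMap_mk (Nn i)).continuous).comp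
              ((continuous_apply i).comp continuous_subtype_val)) _
        have hlift : ∀ (y : ∀ i, G i ⧸ Nn i) (i : I), ∃ a : G i,
            QuotientGroup.mk a = y i ∧ (y i = 1 → a = 1) := by
          intro y i
          by_cases hyi : y i = 1
          · exact ⟨1, by rw [hyi]; rfl, fun _ => rfl⟩
          · obtain ⟨a, ha⟩ := QuotientGroup.mk'_surjective (Nn i) (y i)
            exact ⟨a, ha, fun hh => absurd hh hyi⟩
        have hsurj : Function.Surjective φ := by
          intro y
          choose a ha h1a using hlift (↑y : ∀ i, G i ⧸ Nn i)
          have haD : a ∈ directSumSubgroup I G := by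
            show {i | a i ≠ 1}.Finite
            apply Set.Finite.subset (y.2 : {i | (↑y : ∀ i, G i ⧸ Nn i) i ≠ 1}.Finite)
            intro i hi
            simp only [Set.mem_setOf_eq] at hi ⊢
            intro hyi
            exact hi (h1a i hyi)
          refine ⟨⟨a, haD⟩, ?_⟩
          apply Subtype.ext
          funext i
          show (QuotientGroup.mk (a i) : G i ⧸ Nn i) = (↑y : ∀ i, G i ⧸ Nn i) i
          exact ha i
        have hopen : IsOpenMap φ := by
          intro O hO
          obtain ⟨W, hWopen, rfl⟩ := isOpen_induced_iff.mp hO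
          rw [isOpen_iff_mem_nhds]
          rintro yy ⟨x, hxW, rfl⟩
          obtain ⟨C, W', hW', hsubW⟩ := isOpen_pi_iff.mp hWopen _ hxW
          have hopenB : IsOpen ((Subtype.val :
              ↥(directSumSubgroup I (fun i => G i ⧸ Nn i)) → (∀ i, G i ⧸ Nn i)) ⁻¹'
              (Set.pi ↑C fun i => (QuotientGroup.mk : G i → G i ⧸ Nn i) '' W' i)) := by
            apply IsOpen.preimage continuous_subtype_val
            exact isOpen_set_pi C.finite_toSet fun i hi =>
              QuotientGroup.isOpenMap_coe _ (hW' i hi).1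
          refine Filter.mem_of_superset (hopenB.mem_nhds ?_) ?_
          · show (↑(φ x) : ∀ i, G i ⧸ Nn i) ∈ Set.pi ↑C fun i => QuotientGroup.mk '' W' i
            intro j hj
            simp only [Finset.mem_coe] at hj
            exact ⟨(↑x : ∀ i, G i) j, (hW' j hj).2, rfl⟩
          · intro z hz
            have hz' : ∀ j, j ∈ C → ∃ w, w ∈ W' j ∧
                (QuotientGroup.mk w : G j ⧸ Nn j) = (↑z : ∀ i, G i ⧸ Nn i) j := by
              intro j hj
              obtain ⟨w, hw, hweq⟩ := hz j (Finset.mem_coe.mpr hj)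
              exact ⟨w, hw, hweq⟩
            choose! w hwW hwmk using hz'
            choose b hb h1b using hlift (↑z : ∀ i, G i ⧸ Nn i)
            have hvD : (fun j => if hj : j ∈ C then w j else b j) ∈ directSumSubgroup I G := by
              show {j | (if hj : j ∈ C then w j else b j) ≠ 1}.Finite
              apply Set.Finite.subset
                (C.finite_toSet.union (z.2 : {j | (↑z : ∀ i, G i ⧸ Nn i) j ≠ 1}.Finite))
              intro j hj
              simp only [Set.mem_setOf_eq] at hj
              by_cases hjC : j ∈ C
              · exact Or.inl hjC
              · refine Or.inr ?_
                show (↑z : ∀ i, G i ⧸ Nn i) j ≠ 1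
                intro h1
                exact hj (by simp only [dif_neg hjC]; exact h1b j h1)
            refine ⟨⟨fun j => if hj : j ∈ C then w j else b j, hvD⟩, ?_, ?_⟩
            · show (⟨fun j => if hj : j ∈ C then w j else b j, hvD⟩ :
                ↥(directSumSubgroup I G)) ∈ Subtype.val ⁻¹' W
              apply hsubW
              intro j hj
              simp only [Finset.mem_coe] at hj
              show (if hj : j ∈ C then w j else b j) ∈ W' j
              simp only [dif_pos hj]
              exact hwW j hj
            · apply Subtype.ext
              funext j
              show (QuotientGroup.mk (if hj : j ∈ C then w j else b j) : G j ⧸ Nn j)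
                = (↑z : ∀ i, G i ⧸ Nn i) j
              by_cases hjC : j ∈ C
              · simp only [dif_pos hjC]; exact hwmk j hjC
              · simp only [dif_neg hjC]; exact hb j
        haveI hNormalX : (Subgroup.closure
              (⋃ K ∈ (⋃ i, (fun H => Subgroup.map (emb i) H) '' 𝓗i i),
                (K : Set ↥(directSumSubgroup I G)))).topologicalClosure.Normal := by
          rw [hkey]; exact hpinD
        refine ⟨hNormalX, ?_⟩
        exact SSGP.congr_quot n (hker.trans hkey.symm)
          (ssgp_ker n φ hcont hopen hsurj (IH I (fun i => G i ⧸ Nn i) hqi').2)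

/-- Products and direct sums (with the topology inherited from the product)
of SSGP(n) groups are SSGP(n). -/
theorem ssgp_pi_and_directSum (n : ℕ) (I : Type v) (G : I → Type u) [∀ i, Group (G i)]
    [∀ i, TopologicalSpace (G i)] [∀ i, IsTopologicalGroup (G i)] [∀ i, T2Space (G i)]
    (h : ∀ i, SSGP n (G i)) :
    SSGP n (∀ i, G i) ∧ SSGP n (directSumSubgroup I G) :=
  ssgp_aux n I G h
end
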